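/- For any g = [[a,b],[c,d]] in SL(2,ℝ), the pullback of the 1-form λ₀ = dθ + (1/y) dx on H × S¹ under the map (z, θ) ↦ ((az+b)/(cz+d), θ − 2 arg(cz+d)) equals λ₀. -/

import Mathlib

set_option maxHeartbeats 1000000


/-- The lift to `H × ℝ` of the action of `g = [[a,b],[c,d]] ∈ SL(2,ℝ)` on the unit tangent
bundle `H × S¹`: `(z, θ) ↦ ((az+b)/(cz+d), θ − 2 arg(cz+d))`. -/
noncomputable def mobiusLift (a b c d : ℝ) (p : ℂ × ℝ) : ℂ × ℝ :=
  (((a : ℂ) * p.1 + (b : ℂ)) / ((c : ℂ) * p.1 + (d : ℂ)),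
    p.2 - 2 * Complex.arg ((c : ℂ) * p.1 + (d : ℂ)))

/-- The 1-form `λ₀ = dθ + y⁻¹ dx` on `H × S¹`. -/
noncomputable def lamZero (p v : ℂ × ℝ) : ℝ := v.2 + (p.1.im)⁻¹ * v.1.re

/-- For any `g = [[a,b],[c,d]]` in `SL(2,ℝ)`, the pullback of `λ₀ = dθ + y⁻¹ dx` under the
map `(z, θ) ↦ ((az+b)/(cz+d), θ − 2 arg(cz+d))` equals `λ₀`. -/
theorem pullback_lamZero (a b c d : ℝ) (h : a * d - b * c = 1)
    (z : ℂ) (hz : 0 < z.im) (θ : ℝ) (v : ℂ × ℝ) :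
    lamZero (mobiusLift a b c d (z, θ)) (fderiv ℝ (mobiusLift a b c d) (z, θ) v)
      = lamZero (z, θ) v := by
  set w : ℂ := (c : ℂ) * z + (d : ℂ) with hw
  have hwim : w.im = c * z.im := by simp [hw]
  have hwne : w ≠ 0 := by
    rcases eq_or_ne c 0 with hc0 | hc
    · have hd : d ≠ 0 := by
        intro hd0; rw [hc0, hd0] at h; simp at h
      rw [hw, hc0]
      simpa using hd
    · intro h0
      have := hwim ▸ congrArg Complex.im h0
      simp at this
      rcases this with h' | h' <;> [exact hc h'; exact hz.ne' h']
  -- derivative of first component as ℂ-function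
  have hnum : HasDerivAt (fun z : ℂ => (a : ℂ) * z + b) a z :=
    ((hasDerivAt_id z).const_mul (a : ℂ)).add_const _ |>.congr_deriv (by ring)
  have hden : HasDerivAt (fun z : ℂ => (c : ℂ) * z + d) c z :=
    ((hasDerivAt_id z).const_mul (c : ℂ)).add_const _ |>.congr_deriv (by ring)
  have hf : HasDerivAt (fun z : ℂ => ((a : ℂ) * z + b) / ((c : ℂ) * z + d))
      (((a : ℂ) * w - ((a : ℂ) * z + b) * c) / w ^ 2) z := hnum.div hden hwne
  have h1 : HasFDerivAt (fun p : ℂ × ℝ => ((a : ℂ) * p.1 + b) / ((c : ℂ) * p.1 + d))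
      (((ContinuousLinearMap.smulRight (1 : ℂ →L[ℂ] ℂ)
        (((a : ℂ) * w - ((a : ℂ) * z + b) * c) / w ^ 2)).restrictScalars ℝ).comp
        (ContinuousLinearMap.fst ℝ ℂ ℝ)) (z, θ) :=
    by have e := (hf.hasFDerivAt.restrictScalars ℝ).comp (z, θ) (hasFDerivAt_fst (𝕜 := ℝ) (p := (z, θ))); exact e
  have h2 : HasFDerivAt (fun p : ℂ × ℝ => p.2 - 2 * Complex.arg ((c : ℂ) * p.1 + d))
      ((ContinuousLinearMap.snd ℝ ℂ ℝ) -
        (2 : ℝ) • (Complex.imCLM.comp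
          (((ContinuousLinearMap.smulRight (1 : ℂ →L[ℂ] ℂ) (w⁻¹ * c)).restrictScalars ℝ).comp
            (ContinuousLinearMap.fst ℝ ℂ ℝ)))) (z, θ) := by
    rcases eq_or_ne c 0 with hc0 | hc
    · subst hc0
      have h0 : ((0:ℝ) : ℂ) = 0 := Complex.ofReal_zero
      have hfun : (fun p : ℂ × ℝ => p.2 - 2 * Complex.arg (((0:ℝ) : ℂ) * p.1 + d)) =
          fun p : ℂ × ℝ => p.2 - 2 * Complex.arg (d : ℂ) := by
        funext p; rw [h0, zero_mul, zero_add]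
      have hCLM : (ContinuousLinearMap.snd ℝ ℂ ℝ -
          (2 : ℝ) • (Complex.imCLM.comp
            (((ContinuousLinearMap.smulRight (1 : ℂ →L[ℂ] ℂ)
              (w⁻¹ * ((0:ℝ):ℂ))).restrictScalars ℝ).comp
              (ContinuousLinearMap.fst ℝ ℂ ℝ)))) = ContinuousLinearMap.snd ℝ ℂ ℝ := by
        ext p <;> simp
      rw [hfun, hCLM]
      exact hasFDerivAt_snd.sub_const _
    · have hslit : w ∈ Complex.slitPlane := by
        rw [Complex.mem_slitPlane_iff]
        right
        rw [hwim]
        exact mul_ne_zero hc hz.ne'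
      have hlog : HasDerivAt (fun z : ℂ => Complex.log ((c : ℂ) * z + d)) (w⁻¹ * c) z := by
        exact (Complex.hasDerivAt_log hslit).comp z hden
      have harg : (fun p : ℂ × ℝ => p.2 - 2 * Complex.arg ((c : ℂ) * p.1 + d)) =
          fun p : ℂ × ℝ => p.2 - 2 * (Complex.log ((c : ℂ) * p.1 + d)).im := by
        funext p; rw [Complex.log_im]
      rw [harg]
      have e := ((Complex.imCLM.hasFDerivAt.comp (z, θ)
          ((hlog.hasFDerivAt.restrictScalars ℝ).comp (z, θ) (hasFDerivAt_fst (𝕜 := ℝ) (p := (z, θ))))).const_mul 2)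
      exact hasFDerivAt_snd.sub e
  have hD : HasFDerivAt (mobiusLift a b c d) _ (z, θ) := h1.prodMk h2
  rw [hD.fderiv]
  simp only [mobiusLift, lamZero, ContinuousLinearMap.prod_apply,
    ContinuousLinearMap.comp_apply, ContinuousLinearMap.coe_sub',
    ContinuousLinearMap.coe_fst', ContinuousLinearMap.coe_snd', Pi.sub_apply,
    ContinuousLinearMap.coe_smul', Pi.smul_apply, ContinuousLinearMap.coe_restrictScalars',
    ContinuousLinearMap.smulRight_apply, ContinuousLinearMap.one_apply, smul_eq_mul,
    Complex.imCLM_apply]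
  have hnum1 : (a : ℂ) * w - ((a : ℂ) * z + b) * c = 1 := by
    rw [hw]
    have : (a : ℂ) * ((c:ℂ) * z + d) - ((a : ℂ) * z + b) * c = ((a*d - b*c : ℝ) : ℂ) := by
      push_cast; ring
    rw [this, h, Complex.ofReal_one]
  rw [hnum1]
  rw [← hw]
  set x := z.re with hx
  set y := z.im with hy'
  have hy : y ≠ 0 := ne_of_gt hz
  have hnpos : (0:ℝ) < Complex.normSq w := Complex.normSq_pos.mpr hwne
  have hns : Complex.normSq w ≠ 0 := ne_of_gt hnpos
  have him : (((a:ℂ) * z + b) / w).im = y / Complex.normSq w := by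
    rw [Complex.div_im, div_sub_div_same, div_eq_div_iff hns hns]
    simp only [hw, Complex.add_im, Complex.add_re, Complex.mul_im, Complex.mul_re,
      Complex.ofReal_re, Complex.ofReal_im, ← hx, ← hy']
    linear_combination (Complex.normSq w * y) * h
  rw [him]
  rw [show (1:ℂ)/w^2 = w⁻¹ * w⁻¹ by rw [one_div, sq, mul_inv]]
  simp only [one_div, Complex.mul_re, Complex.mul_im, Complex.inv_re, Complex.inv_im, sq,
    Complex.normSq_apply, hwim, Complex.ofReal_re, Complex.ofReal_im]
  have hns' : w.re * w.re + c * y * (c * y) ≠ 0 := by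
    rw [Complex.normSq_apply, hwim] at hns
    exact hns
  field_simp
  ring_nf
  have hden' : y ^ 2 * c ^ 2 + w.re ^ 2 ≠ 0 := by
    intro h0; apply hns'; linear_combination h0
  field_simp
  ring
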